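/- For r < 0, the vector field F(x,y,z) = (−y² − yz, (r x/(r−1))(y+z), (−x/(r−1))(y+z)) on ℝ³ admits the first integral I(x,y,z) = x² + (1/(r(r−1)))·((r−1)²y² + (y+rz)²), which is positive-definite; hence F is a complete vector field. -/

import Mathlib

open Set

/-- The geodesic field `F₄ᵣ` of `Q₄ᵣ` on `aff(ℝ) ⊕ ℝ` (`λ = 0`). -/
noncomputable def F4r (r : ℝ) (v : Fin 3 → ℝ) : Fin 3 → ℝ :=
  ![-(v 1) ^ 2 - v 1 * v 2, r * v 0 / (r - 1) * (v 1 + v 2), -v 0 / (r - 1) * (v 1 + v 2)]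

namespace Stmt8Aux

/-- Conservation of the first integral along solutions of any scalar multiple of the field. -/
lemma key {r : ℝ} (hr : r < 0) (γ : ℝ → Fin 3 → ℝ) (t : ℝ) (c : ℝ)
    (h : HasDerivAt γ (c • F4r r (γ t)) t) :
    HasDerivAt (fun u => (γ u 0) ^ 2 +
      1 / (r * (r - 1)) * ((r - 1) ^ 2 * (γ u 1) ^ 2 + (γ u 1 + r * γ u 2) ^ 2)) 0 t := by
  have hr0 : r ≠ 0 := ne_of_lt hr
  have hr1 : r - 1 ≠ 0 := by intro h'; nlinarith
  have hp := hasDerivAt_pi.mp h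
  have h0 := hp 0
  have h1 := hp 1
  have h2 := hp 2
  simp only [F4r, Pi.smul_apply, smul_eq_mul, Matrix.cons_val_zero, Matrix.cons_val_one,
    Matrix.head_cons, Matrix.cons_val_two, Matrix.tail_cons] at h0 h1 h2
  have Hd := (h0.pow 2).add
    ((((h1.pow 2).const_mul ((r - 1) ^ 2)).add
      ((h1.add (h2.const_mul r)).pow 2)).const_mul (1 / (r * (r - 1))))
  refine Hd.congr_deriv ?_
  field_simp
  ring

lemma q0 {B D b c b' c' : ℝ} (hB : 0 ≤ B) (hD : 0 ≤ D)
    (hb : |b| ≤ B) (hc' : |c'| ≤ B)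
    (hdb : |b - b'| ≤ D) (hdc : |c - c'| ≤ D) (hb' : |b'| ≤ B) :
    |(-(b ^ 2) - b * c) - (-(b' ^ 2) - b' * c')| ≤ 4 * B * D := by
  have h : (-(b ^ 2) - b * c) - (-(b' ^ 2) - b' * c')
      = (b' - b) * (b' + b) + ((b' - b) * c' + b * (c' - c)) := by ring
  rw [h]
  have e1 : |(b' - b) * (b' + b)| ≤ D * (2 * B) := by
    rw [abs_mul]
    exact mul_le_mul (by rwa [abs_sub_comm] at hdb) ((abs_add_le _ _).trans (by linarith))
      (abs_nonneg _) hD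
  have e2 : |(b' - b) * c'| ≤ D * B := by
    rw [abs_mul]
    exact mul_le_mul (by rwa [abs_sub_comm] at hdb) hc' (abs_nonneg _) hD
  have e3 : |b * (c' - c)| ≤ B * D := by
    rw [abs_mul]
    exact mul_le_mul hb (by rwa [abs_sub_comm] at hdc) (abs_nonneg _) hB
  calc |(b' - b) * (b' + b) + ((b' - b) * c' + b * (c' - c))|
      ≤ |(b' - b) * (b' + b)| + |(b' - b) * c' + b * (c' - c)| := abs_add_le _ _
    _ ≤ |(b' - b) * (b' + b)| + (|(b' - b) * c'| + |b * (c' - c)|) := by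
        gcongr; exact abs_add_le _ _
    _ ≤ D * (2 * B) + (D * B + B * D) := by gcongr
    _ = 4 * B * D := by ring

lemma q1 {B D a b c a' b' c' : ℝ} (hB : 0 ≤ B) (hD : 0 ≤ D)
    (ha' : |a'| ≤ B) (hb : |b| ≤ B) (hc : |c| ≤ B)
    (hda : |a - a'| ≤ D) (hdb : |b - b'| ≤ D) (hdc : |c - c'| ≤ D) :
    |a * (b + c) - a' * (b' + c')| ≤ 4 * B * D := by
  have h : a * (b + c) - a' * (b' + c')
      = (a - a') * (b + c) + a' * ((b - b') + (c - c')) := by ring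
  rw [h]
  have e1 : |(a - a') * (b + c)| ≤ D * (2 * B) := by
    rw [abs_mul]
    exact mul_le_mul hda ((abs_add_le _ _).trans (by linarith)) (abs_nonneg _) hD
  have e2 : |a' * ((b - b') + (c - c'))| ≤ B * (2 * D) := by
    rw [abs_mul]
    exact mul_le_mul ha' ((abs_add_le _ _).trans (by linarith)) (abs_nonneg _) hB
  calc |(a - a') * (b + c) + a' * ((b - b') + (c - c'))|
      ≤ |(a - a') * (b + c)| + |a' * ((b - b') + (c - c'))| := abs_add_le _ _
    _ ≤ D * (2 * B) + B * (2 * D) := add_le_add e1 e2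
    _ = 4 * B * D := by ring

lemma coef1 {r : ℝ} (hr : r < 0) : |r / (r - 1)| ≤ 1 := by
  rw [abs_div, abs_of_neg hr, abs_of_neg (by linarith : r - 1 < 0),
    div_le_one (by linarith)]
  linarith

lemma coef2 {r : ℝ} (hr : r < 0) : |(-1 : ℝ) / (r - 1)| ≤ 1 := by
  rw [abs_div, abs_of_neg (by norm_num : (-1:ℝ) < 0), abs_of_neg (by linarith : r - 1 < 0),
    div_le_one (by linarith)]
  linarith

/-- Bound on `F4r` on a ball. -/
lemma F_norm_le {r : ℝ} (hr : r < 0) {B : ℝ} (hB : 1 ≤ B) {u : Fin 3 → ℝ} (hu : ‖u‖ ≤ B) :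
    ‖F4r r u‖ ≤ 2 * B ^ 2 := by
  have hB0 : (0:ℝ) ≤ B := by linarith
  have h0 : |u 0| ≤ B := le_trans (norm_le_pi_norm u 0) hu
  have h1 : |u 1| ≤ B := le_trans (norm_le_pi_norm u 1) hu
  have h2 : |u 2| ≤ B := le_trans (norm_le_pi_norm u 2) hu
  have hsum : |u 1 + u 2| ≤ 2 * B := (abs_add_le _ _).trans (by linarith)
  have hprod : |u 0 * (u 1 + u 2)| ≤ 2 * B ^ 2 := by
    rw [abs_mul]
    calc |u 0| * |u 1 + u 2| ≤ B * (2 * B) := mul_le_mul h0 hsum (abs_nonneg _) hB0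
      _ = 2 * B ^ 2 := by ring
  apply (pi_norm_le_iff_of_nonneg (by positivity)).mpr
  intro i
  fin_cases i <;> simp only [F4r, Matrix.cons_val_zero, Matrix.cons_val_one, Matrix.head_cons,
    Matrix.cons_val_two, Matrix.tail_cons, Real.norm_eq_abs]
  · calc |-(u 1) ^ 2 - u 1 * u 2| = |u 1 * (u 1 + u 2)| := by
          rw [show -(u 1) ^ 2 - u 1 * u 2 = -(u 1 * (u 1 + u 2)) by ring, abs_neg]
      _ ≤ B * (2 * B) := by rw [abs_mul]; exact mul_le_mul h1 hsum (abs_nonneg _) hB0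
      _ ≤ 2 * B ^ 2 := by nlinarith
  · calc |r * u 0 / (r - 1) * (u 1 + u 2)| = |r / (r - 1)| * |u 0 * (u 1 + u 2)| := by
          rw [← abs_mul]; ring_nf
      _ ≤ 1 * (2 * B ^ 2) := mul_le_mul (coef1 hr) hprod (abs_nonneg _) zero_le_one
      _ = 2 * B ^ 2 := one_mul _
  · calc |-u 0 / (r - 1) * (u 1 + u 2)| = |(-1:ℝ) / (r - 1)| * |u 0 * (u 1 + u 2)| := by
          rw [← abs_mul]; ring_nf
      _ ≤ 1 * (2 * B ^ 2) := mul_le_mul (coef2 hr) hprod (abs_nonneg _) zero_le_one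
      _ = 2 * B ^ 2 := one_mul _

/-- Lipschitz bound for `F4r` on a ball. -/
lemma F_sub_le {r : ℝ} (hr : r < 0) {B : ℝ} (hB : 1 ≤ B) {u w : Fin 3 → ℝ}
    (hu : ‖u‖ ≤ B) (hw : ‖w‖ ≤ B) :
    ‖F4r r u - F4r r w‖ ≤ 4 * B * ‖u - w‖ := by
  have hB0 : (0:ℝ) ≤ B := by linarith
  set D := ‖u - w‖ with hD
  have hD0 : 0 ≤ D := norm_nonneg _
  have hu0 : |u 0| ≤ B := le_trans (norm_le_pi_norm u 0) hu
  have hu1 : |u 1| ≤ B := le_trans (norm_le_pi_norm u 1) hu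
  have hu2 : |u 2| ≤ B := le_trans (norm_le_pi_norm u 2) hu
  have hw0 : |w 0| ≤ B := le_trans (norm_le_pi_norm w 0) hw
  have hw1 : |w 1| ≤ B := le_trans (norm_le_pi_norm w 1) hw
  have hw2 : |w 2| ≤ B := le_trans (norm_le_pi_norm w 2) hw
  have hd : ∀ i, |u i - w i| ≤ D := by
    intro i
    have := norm_le_pi_norm (u - w) i
    simpa [Real.norm_eq_abs] using this
  apply (pi_norm_le_iff_of_nonneg (by positivity)).mpr
  intro i
  fin_cases i <;> simp only [F4r, Pi.sub_apply, Matrix.cons_val_zero, Matrix.cons_val_one,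
    Matrix.head_cons, Matrix.cons_val_two, Matrix.tail_cons, Real.norm_eq_abs]
  · exact q0 hB0 hD0 hu1 hw2 (hd 1) (hd 2) hw1
  · calc |r * u 0 / (r - 1) * (u 1 + u 2) - r * w 0 / (r - 1) * (w 1 + w 2)|
        = |r / (r - 1)| * |u 0 * (u 1 + u 2) - w 0 * (w 1 + w 2)| := by
          rw [← abs_mul]; ring_nf
      _ ≤ 1 * (4 * B * D) := mul_le_mul (coef1 hr)
          (q1 hB0 hD0 hw0 hu1 hu2 (hd 0) (hd 1) (hd 2)) (abs_nonneg _) zero_le_one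
      _ = 4 * B * D := one_mul _
  · calc |-u 0 / (r - 1) * (u 1 + u 2) - -w 0 / (r - 1) * (w 1 + w 2)|
        = |(-1:ℝ) / (r - 1)| * |u 0 * (u 1 + u 2) - w 0 * (w 1 + w 2)| := by
          rw [← abs_mul]; ring_nf
      _ ≤ 1 * (4 * B * D) := mul_le_mul (coef2 hr)
          (q1 hB0 hD0 hw0 hu1 hu2 (hd 0) (hd 1) (hd 2)) (abs_nonneg _) zero_le_one
      _ = 4 * B * D := one_mul _

/-- The cutoff function. -/
noncomputable def chi (M : ℝ) (w : Fin 3 → ℝ) : ℝ := min (max (M + 1 - ‖w‖) 0) 1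

lemma chi_nonneg (M : ℝ) (w : Fin 3 → ℝ) : 0 ≤ chi M w :=
  le_min (le_max_right _ _) zero_le_one

lemma chi_le_one (M : ℝ) (w : Fin 3 → ℝ) : chi M w ≤ 1 := min_le_right _ _

lemma chi_eq_one {M : ℝ} {w : Fin 3 → ℝ} (h : ‖w‖ ≤ M) : chi M w = 1 := by
  have h1 : (1:ℝ) ≤ M + 1 - ‖w‖ := by linarith
  rw [chi, max_eq_left (by linarith), min_eq_right h1]

lemma norm_lt_of_chi_ne {M : ℝ} {w : Fin 3 → ℝ} (h : chi M w ≠ 0) : ‖w‖ < M + 1 := by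
  by_contra hc
  push_neg at hc
  apply h
  rw [chi, max_eq_right (by linarith), min_eq_left zero_le_one]

lemma chi_lip (M : ℝ) : ∀ u w : Fin 3 → ℝ, |chi M u - chi M w| ≤ ‖u - w‖ := by
  intro u w
  have h1 : |chi M u - chi M w| ≤ |max (M + 1 - ‖u‖) 0 - max (M + 1 - ‖w‖) 0| := by
    have := abs_min_sub_min_le_max (max (M + 1 - ‖u‖) 0) 1 (max (M + 1 - ‖w‖) 0) 1
    simpa [chi] using this
  have h2 : |max (M + 1 - ‖u‖) 0 - max (M + 1 - ‖w‖) 0| ≤ |(M + 1 - ‖u‖) - (M + 1 - ‖w‖)| :=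
    abs_max_sub_max_le_abs _ _ _
  have h3 : |(M + 1 - ‖u‖) - (M + 1 - ‖w‖)| = |‖w‖ - ‖u‖| := by ring_nf
  have h4 : |‖w‖ - ‖u‖| ≤ ‖w - u‖ := abs_norm_sub_norm_le _ _
  rw [norm_sub_rev u w]
  calc |chi M u - chi M w| ≤ |max (M + 1 - ‖u‖) 0 - max (M + 1 - ‖w‖) 0| := h1
    _ ≤ |(M + 1 - ‖u‖) - (M + 1 - ‖w‖)| := h2
    _ = |‖w‖ - ‖u‖| := h3
    _ ≤ ‖w - u‖ := h4

/-- The cut-off field. -/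
noncomputable def Hf (r M : ℝ) (w : Fin 3 → ℝ) : Fin 3 → ℝ := chi M w • F4r r w

lemma Hf_norm_le {r M : ℝ} (hr : r < 0) (hM : 0 ≤ M) (w : Fin 3 → ℝ) :
    ‖Hf r M w‖ ≤ 2 * (M + 2) ^ 2 := by
  by_cases h : chi M w = 0
  · rw [Hf, h, zero_smul, norm_zero]; positivity
  · have hw : ‖w‖ ≤ M + 2 := by have := norm_lt_of_chi_ne h; linarith
    rw [Hf, norm_smul, Real.norm_eq_abs, abs_of_nonneg (chi_nonneg M w)]
    calc chi M w * ‖F4r r w‖ ≤ 1 * (2 * (M + 2) ^ 2) :=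
        mul_le_mul (chi_le_one M w) (F_norm_le hr (by linarith) hw) (norm_nonneg _)
          zero_le_one
      _ = 2 * (M + 2) ^ 2 := one_mul _

lemma Hf_lip_aux {r M : ℝ} (hr : r < 0) (hM : 0 ≤ M) (u w : Fin 3 → ℝ) :
    ‖Hf r M u - Hf r M w‖ ≤ (2 * (M + 2) ^ 2 + 4 * (M + 2)) * ‖u - w‖ := by
  set B := M + 2 with hB
  have hB1 : (1:ℝ) ≤ B := by simp [hB]; linarith
  have hB0 : (0:ℝ) ≤ B := by linarith
  set D := ‖u - w‖ with hD
  have hD0 : 0 ≤ D := norm_nonneg _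
  rcases le_or_gt ‖u‖ B with hu | hu
  · rcases le_or_gt ‖w‖ B with hw | hw
    · -- both in ball B
      have split : Hf r M u - Hf r M w
          = (chi M u - chi M w) • F4r r u + chi M w • (F4r r u - F4r r w) := by
        rw [Hf, Hf, sub_smul, smul_sub]; abel
      rw [split]
      calc ‖(chi M u - chi M w) • F4r r u + chi M w • (F4r r u - F4r r w)‖
          ≤ ‖(chi M u - chi M w) • F4r r u‖ + ‖chi M w • (F4r r u - F4r r w)‖ :=
            norm_add_le _ _
        _ ≤ D * (2 * B ^ 2) + 1 * (4 * B * D) := by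
            rw [norm_smul, norm_smul, Real.norm_eq_abs, Real.norm_eq_abs,
              abs_of_nonneg (chi_nonneg M w)]
            exact add_le_add
              (mul_le_mul (chi_lip M u w) (F_norm_le hr hB1 hu) (norm_nonneg _) hD0)
              (mul_le_mul (chi_le_one M w) (F_sub_le hr hB1 hu hw) (norm_nonneg _)
                zero_le_one)
        _ ≤ (2 * B ^ 2 + 4 * B) * D := by ring_nf; nlinarith
    · -- w outside ball B : chi M w = 0
      have hcw : chi M w = 0 := by
        by_contra hc
        have := norm_lt_of_chi_ne hc
        simp only [hB] at hw
        linarith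
      rw [Hf, Hf, hcw, zero_smul, sub_zero]
      by_cases hcu : chi M u = 0
      · rw [hcu, zero_smul, norm_zero]; positivity
      · have hu' : ‖u‖ < M + 1 := norm_lt_of_chi_ne hcu
        have hD1 : 1 ≤ D := by
          have : ‖w‖ - ‖u‖ ≤ ‖w - u‖ := norm_sub_norm_le _ _
          rw [norm_sub_rev] at this
          simp only [hB] at hw
          linarith
        rw [norm_smul, Real.norm_eq_abs, abs_of_nonneg (chi_nonneg M u)]
        calc chi M u * ‖F4r r u‖ ≤ 1 * (2 * B ^ 2) :=
            mul_le_mul (chi_le_one M u) (F_norm_le hr hB1 (by linarith)) (norm_nonneg _)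
              zero_le_one
          _ = 2 * B ^ 2 := one_mul _
          _ ≤ (2 * B ^ 2 + 4 * B) * 1 := by nlinarith
          _ ≤ (2 * B ^ 2 + 4 * B) * D := by nlinarith
  · -- u outside ball B : chi M u = 0
    have hcu : chi M u = 0 := by
      by_contra hc
      have := norm_lt_of_chi_ne hc
      linarith
    rw [Hf, Hf, hcu, zero_smul, zero_sub, norm_neg]
    by_cases hcw : chi M w = 0
    · rw [hcw, zero_smul, norm_zero]; positivity
    · have hw' : ‖w‖ < M + 1 := norm_lt_of_chi_ne hcw
      have hD1 : 1 ≤ D := by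
        have : ‖u‖ - ‖w‖ ≤ ‖u - w‖ := norm_sub_norm_le _ _
        linarith
      rw [norm_smul, Real.norm_eq_abs, abs_of_nonneg (chi_nonneg M w)]
      calc chi M w * ‖F4r r w‖ ≤ 1 * (2 * B ^ 2) :=
          mul_le_mul (chi_le_one M w) (F_norm_le hr hB1 (by linarith)) (norm_nonneg _)
            zero_le_one
        _ = 2 * B ^ 2 := one_mul _
        _ ≤ (2 * B ^ 2 + 4 * B) * 1 := by nlinarith
        _ ≤ (2 * B ^ 2 + 4 * B) * D := by nlinarith

lemma Hf_lip {r M : ℝ} (hr : r < 0) (hM : 0 ≤ M) :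
    LipschitzWith (Real.toNNReal (2 * (M + 2) ^ 2 + 4 * (M + 2))) (Hf r M) := by
  apply LipschitzWith.of_dist_le_mul
  intro u w
  rw [dist_eq_norm, dist_eq_norm]
  calc ‖Hf r M u - Hf r M w‖ ≤ (2 * (M + 2) ^ 2 + 4 * (M + 2)) * ‖u - w‖ :=
      Hf_lip_aux hr hM u w
    _ = (Real.toNNReal (2 * (M + 2) ^ 2 + 4 * (M + 2)) : ℝ) * ‖u - w‖ := by
      rw [Real.coe_toNNReal _ (by positivity)]

/-- Global existence for a bounded globally Lipschitz field. -/
lemma global_exists (H : (Fin 3 → ℝ) → (Fin 3 → ℝ)) (K : NNReal) (C₀ : ℝ) (hC₀ : 0 ≤ C₀)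
    (hlip : LipschitzWith K H) (hbd : ∀ x, ‖H x‖ ≤ C₀) (x₀ : Fin 3 → ℝ) :
    ∃ γ : ℝ → Fin 3 → ℝ, γ 0 = x₀ ∧ ∀ t, HasDerivAt γ (H (γ t)) t := by
  have main : ∀ n : ℕ, ∃ f : ℝ → Fin 3 → ℝ, f 0 = x₀ ∧
      ∀ t ∈ Ioo (-(n + 1 : ℝ)) (n + 1), HasDerivAt f (H (f t)) t := by
    intro n
    have hn : (0:ℝ) ≤ n := Nat.cast_nonneg n
    have hpl : IsPicardLindelof (fun _ x => H x) (tmin := -(n + 1 : ℝ)) (tmax := n + 1)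
        ⟨0, by constructor <;> linarith⟩ x₀ (Real.toNNReal (C₀ * (n + 1))) 0
        (Real.toNNReal C₀) K :=
      { lipschitzOnWith := fun t _ => fun x _ y _ => hlip x y
        continuousOn := fun x _ => continuousOn_const
        norm_le := fun t _ x _ => by rw [Real.coe_toNNReal _ hC₀]; exact hbd x
        mul_max_le := by
          simp only [NNReal.coe_zero, sub_zero, zero_sub, neg_neg, max_self]
          rw [Real.coe_toNNReal _ hC₀, Real.coe_toNNReal _ (by positivity)] }
    obtain ⟨f, hf0, hf⟩ := hpl.exists_eq_forall_mem_Icc_hasDerivWithinAt₀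
    exact ⟨f, hf0, fun t ht =>
      (hf t (Ioo_subset_Icc_self ht)).hasDerivAt (Icc_mem_nhds ht.1 ht.2)⟩
  choose f hf0 hf using main
  have agree : ∀ m n : ℕ, m ≤ n → ∀ t ∈ Ioo (-(m + 1 : ℝ)) (m + 1), f m t = f n t := by
    intro m n hmn
    have hmn' : (m : ℝ) ≤ n := Nat.cast_le.mpr hmn
    have hm : (0:ℝ) ≤ m := Nat.cast_nonneg m
    have hsub : Ioo (-(m + 1 : ℝ)) (m + 1) ⊆ Ioo (-(n + 1 : ℝ)) (n + 1) :=
      Ioo_subset_Ioo (by linarith) (by linarith)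
    exact ODE_solution_unique_of_mem_Ioo (v := fun _ => H) (s := fun _ => univ)
      (fun t _ => fun x _ y _ => hlip x y)
      (⟨by linarith, by linarith⟩ : (0:ℝ) ∈ Ioo (-(m + 1 : ℝ)) (m + 1))
      (fun s hs => ⟨hf m s hs, trivial⟩)
      (fun s hs => ⟨hf n s (hsub hs), trivial⟩)
      (by rw [hf0, hf0])
  set γ : ℝ → Fin 3 → ℝ := fun t => f ⌊|t|⌋₊ t with hγ
  have keyfact : ∀ (n : ℕ) (t : ℝ), t ∈ Ioo (-(n + 1 : ℝ)) (n + 1) → γ t = f n t := by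
    intro n t ht
    have h1 : |t| < n + 1 := abs_lt.mpr ⟨ht.1, ht.2⟩
    have h2 : ⌊|t|⌋₊ ≤ n := by
      have h2' : ⌊|t|⌋₊ < n + 1 := (Nat.floor_lt (abs_nonneg t)).mpr (by push_cast; exact h1)
      omega
    have h3 : t ∈ Ioo (-((⌊|t|⌋₊ : ℝ) + 1)) ((⌊|t|⌋₊ : ℝ) + 1) := by
      constructor
      · have := Nat.lt_floor_add_one |t|
        cases abs_cases t with
        | inl h => linarith [h.1, (by positivity : (0:ℝ) ≤ (⌊|t|⌋₊:ℝ))]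
        | inr h => linarith [h.1]
      · have := Nat.lt_floor_add_one |t|
        cases abs_cases t with
        | inl h => linarith [h.1]
        | inr h => linarith [h.1, (by positivity : (0:ℝ) ≤ (⌊|t|⌋₊:ℝ))]
    exact agree _ n h2 t h3
  refine ⟨γ, ?_, ?_⟩
  · have : γ 0 = f ⌊|(0:ℝ)|⌋₊ 0 := rfl
    rw [this]
    simp only [abs_zero, Nat.floor_zero]
    exact hf0 0
  · intro t
    set n := ⌊|t|⌋₊ with hn
    have htm : t ∈ Ioo (-(n + 1 : ℝ)) (n + 1) := by
      constructor
      · have := Nat.lt_floor_add_one |t|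
        cases abs_cases t with
        | inl h => linarith [h.1, (by positivity : (0:ℝ) ≤ (n:ℝ))]
        | inr h => linarith [h.1]
      · have := Nat.lt_floor_add_one |t|
        cases abs_cases t with
        | inl h => linarith [h.1]
        | inr h => linarith [h.1, (by positivity : (0:ℝ) ≤ (n:ℝ))]
    have heq : γ =ᶠ[nhds t] f n :=
      Filter.eventually_of_mem (Ioo_mem_nhds htm.1 htm.2) (fun s hs => keyfact n s hs)
    have hd : HasDerivAt γ (H (f n t)) t :=
      (hf n t htm).congr_of_eventuallyEq heq
    rwa [← keyfact n t htm] at hd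

/-- Coercivity: sublevel sets of the first integral are bounded. -/
lemma bound_of_I_le {r : ℝ} (hr : r < 0) {C : ℝ} (w : Fin 3 → ℝ)
    (h : (w 0) ^ 2 + 1 / (r * (r - 1)) * ((r - 1) ^ 2 * (w 1) ^ 2 + (w 1 + r * w 2) ^ 2) ≤ C) :
    ‖w‖ ≤ Real.sqrt C + (Real.sqrt (r * (r - 1) * C) + Real.sqrt C) / (-r) := by
  have hrr : 0 < r * (r - 1) := mul_pos_of_neg_of_neg hr (by linarith)
  have hA : 0 < 1 / (r * (r - 1)) := by positivity
  have hq2 : (0:ℝ) ≤ (r - 1) ^ 2 * (w 1) ^ 2 + (w 1 + r * w 2) ^ 2 := by positivity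
  have h0 : (w 0) ^ 2 ≤ C := by nlinarith [mul_nonneg hA.le hq2]
  have hkey : (1:ℝ) ≤ 1 / (r * (r - 1)) * (r - 1) ^ 2 := by
    rw [div_mul_eq_mul_div, one_mul, le_div_iff₀ hrr]
    nlinarith
  have h1 : (w 1) ^ 2 ≤ C := by
    nlinarith [mul_nonneg (sub_nonneg.mpr hkey) (sq_nonneg (w 1)),
      mul_nonneg hA.le (sq_nonneg (w 1 + r * w 2)), sq_nonneg (w 0)]
  have h2 : (w 1 + r * w 2) ^ 2 ≤ r * (r - 1) * C := by
    have hAq : 1 / (r * (r - 1)) * (w 1 + r * w 2) ^ 2 ≤ C := by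
      nlinarith [mul_nonneg (sub_nonneg.mpr hkey) (sq_nonneg (w 1)),
        mul_nonneg hA.le (sq_nonneg (w 1)), sq_nonneg (w 0),
        mul_nonneg hA.le (mul_nonneg (sq_nonneg (r - 1)) (sq_nonneg (w 1)))]
    have := mul_le_mul_of_nonneg_left hAq hrr.le
    calc (w 1 + r * w 2) ^ 2 = r * (r - 1) * (1 / (r * (r - 1)) * (w 1 + r * w 2) ^ 2) := by
          rw [← mul_assoc, mul_one_div_cancel hrr.ne', one_mul]
      _ ≤ r * (r - 1) * C := this
  have ha0 : |w 0| ≤ Real.sqrt C := by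
    rw [← Real.sqrt_sq_eq_abs]; exact Real.sqrt_le_sqrt h0
  have ha1 : |w 1| ≤ Real.sqrt C := by
    rw [← Real.sqrt_sq_eq_abs]; exact Real.sqrt_le_sqrt h1
  have hx : |w 1 + r * w 2| ≤ Real.sqrt (r * (r - 1) * C) := by
    rw [← Real.sqrt_sq_eq_abs]; exact Real.sqrt_le_sqrt h2
  have hnr : (0:ℝ) < -r := by linarith
  have ha2 : |w 2| ≤ (Real.sqrt (r * (r - 1) * C) + Real.sqrt C) / (-r) := by
    have hrw : |r * w 2| ≤ Real.sqrt (r * (r - 1) * C) + Real.sqrt C := by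
      have e : r * w 2 = (w 1 + r * w 2) - w 1 := by ring
      rw [e]
      calc |(w 1 + r * w 2) - w 1| ≤ |w 1 + r * w 2| + |w 1| := abs_sub _ _
        _ ≤ Real.sqrt (r * (r - 1) * C) + Real.sqrt C := add_le_add hx ha1
    rw [abs_mul, abs_of_neg hr] at hrw
    rw [le_div_iff₀ hnr]
    linarith
  have hM0 : 0 ≤ Real.sqrt C := Real.sqrt_nonneg _
  have hM1 : 0 ≤ (Real.sqrt (r * (r - 1) * C) + Real.sqrt C) / (-r) :=
    div_nonneg (add_nonneg (Real.sqrt_nonneg _) (Real.sqrt_nonneg _)) hnr.le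
  apply (pi_norm_le_iff_of_nonneg (by linarith)).mpr
  intro i
  fin_cases i
  all_goals rw [Real.norm_eq_abs]
  · exact le_trans ha0 (by linarith)
  · exact le_trans ha1 (by linarith)
  · exact le_trans ha2 (by linarith)

end Stmt8Aux

open Stmt8Aux in
/-- For `r < 0`, `I = x² + (1/(r(r−1)))((r−1)²y² + (y+rz)²)` is a
positive-definite first integral of `F₄ᵣ`; hence `F₄ᵣ` is complete. -/
theorem stmt_8 (r : ℝ) (hr : r < 0) :
    (∀ (γ : ℝ → Fin 3 → ℝ) (t : ℝ), HasDerivAt γ (F4r r (γ t)) t →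
        HasDerivAt (fun u => (γ u 0) ^ 2 +
          1 / (r * (r - 1)) * ((r - 1) ^ 2 * (γ u 1) ^ 2 + (γ u 1 + r * γ u 2) ^ 2)) 0 t) ∧
    (∀ v : Fin 3 → ℝ, v ≠ 0 →
        0 < (v 0) ^ 2 + 1 / (r * (r - 1)) * ((r - 1) ^ 2 * (v 1) ^ 2 + (v 1 + r * v 2) ^ 2)) ∧
    (∀ v : Fin 3 → ℝ, ∃ γ : ℝ → Fin 3 → ℝ, γ 0 = v ∧
        ∀ t, HasDerivAt γ (F4r r (γ t)) t) := by
  have hrr : 0 < r * (r - 1) := mul_pos_of_neg_of_neg hr (by linarith)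
  have hA : 0 < 1 / (r * (r - 1)) := by positivity
  refine ⟨?_, ?_, ?_⟩
  · intro γ t h
    exact key hr γ t 1 (by rw [one_smul]; exact h)
  · intro v hv
    have hq2 : (0:ℝ) ≤ (r - 1) ^ 2 * (v 1) ^ 2 + (v 1 + r * v 2) ^ 2 := by positivity
    by_cases h0 : v 0 = 0
    · by_cases h1 : v 1 = 0
      · have h2 : v 2 ≠ 0 := by
          intro h2
          apply hv
          funext i
          fin_cases i <;> assumption
        have hpos : 0 < (v 1 + r * v 2) ^ 2 := by
          rw [h1, zero_add]
          exact sq_pos_iff.mpr (mul_ne_zero (ne_of_lt hr) h2)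
        nlinarith [sq_nonneg (v 0), mul_nonneg (sq_nonneg (r - 1)) (sq_nonneg (v 1))]
      · have hpos : 0 < (r - 1) ^ 2 * (v 1) ^ 2 := by
          have h' : (0:ℝ) < (r - 1) ^ 2 := sq_pos_iff.mpr (by intro hq; nlinarith)
          exact mul_pos h' (sq_pos_iff.mpr h1)
        nlinarith [sq_nonneg (v 0), sq_nonneg (v 1 + r * v 2)]
    · have hpos : 0 < (v 0) ^ 2 := sq_pos_iff.mpr h0
      nlinarith [mul_nonneg hA.le hq2]
  · intro v₀
    set C : ℝ := (v₀ 0) ^ 2 +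
      1 / (r * (r - 1)) * ((r - 1) ^ 2 * (v₀ 1) ^ 2 + (v₀ 1 + r * v₀ 2) ^ 2) with hCdef
    set M : ℝ := Real.sqrt C + (Real.sqrt (r * (r - 1) * C) + Real.sqrt C) / (-r) with hMdef
    have hnr : (0:ℝ) < -r := by linarith
    have hM : 0 ≤ M := add_nonneg (Real.sqrt_nonneg _)
      (div_nonneg (add_nonneg (Real.sqrt_nonneg _) (Real.sqrt_nonneg _)) hnr.le)
    obtain ⟨γ, hγ0, hγ'⟩ := global_exists (Hf r M) _ (2 * (M + 2) ^ 2) (by positivity)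
      (Hf_lip hr hM) (Hf_norm_le hr hM) v₀
    -- the first integral is constant along γ
    have hderiv : ∀ t, HasDerivAt (fun u => (γ u 0) ^ 2 +
        1 / (r * (r - 1)) * ((r - 1) ^ 2 * (γ u 1) ^ 2 + (γ u 1 + r * γ u 2) ^ 2)) 0 t := by
      intro t
      exact key hr γ t (chi M (γ t)) (hγ' t)
    have hconst : ∀ t, (γ t 0) ^ 2 +
        1 / (r * (r - 1)) * ((r - 1) ^ 2 * (γ t 1) ^ 2 + (γ t 1 + r * γ t 2) ^ 2) = C := by
      intro t
      have := is_const_of_deriv_eq_zero (f := fun u => (γ u 0) ^ 2 +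
          1 / (r * (r - 1)) * ((r - 1) ^ 2 * (γ u 1) ^ 2 + (γ u 1 + r * γ u 2) ^ 2))
        (fun x => (hderiv x).differentiableAt) (fun x => (hderiv x).deriv) t 0
      rw [hCdef]
      simpa [hγ0] using this
    have hbound : ∀ t, ‖γ t‖ ≤ M := by
      intro t
      rw [hMdef]
      exact bound_of_I_le hr (γ t) (le_of_eq (hconst t))
    refine ⟨γ, hγ0, fun t => ?_⟩
    have h1 : Hf r M (γ t) = F4r r (γ t) := by
      rw [Hf, chi_eq_one (hbound t), one_smul]
    rw [← h1]
    exact hγ' t
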